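/- Let G be a cograph and let σ : V(G) → S be a surjective proper vertex coloring of G that is an hc-coloring of G. Then the number of colors used satisfies |S| = χ(G), the chromatic number of G. -/
import Mathlib


/-! Basic notions: cographs, binary cotrees, hc-colorings, greedy colorings,
recursively minimal (color-minimal) colorings, and counting of hc-colorings. -/

variable {V : Type*}

/-- A cograph is a (finite simple) graph with no induced path on four vertices. -/
def IsCograph (G : SimpleGraph V) : Prop :=
  ¬ ∃ a b c d : V, a ≠ b ∧ a ≠ c ∧ a ≠ d ∧ b ≠ c ∧ b ≠ d ∧ c ≠ d ∧
      G.Adj a b ∧ G.Adj b c ∧ G.Adj c d ∧ ¬ G.Adj a c ∧ ¬ G.Adj a d ∧ ¬ G.Adj b d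

/-- Binary trees whose leaves carry vertices and whose inner nodes carry a label:
`true` = join, `false` = disjoint union. -/
inductive Cotree (V : Type*) where
  | leaf (v : V)
  | node (t : Bool) (l r : Cotree V)

/-- The set of vertices at the leaves of a cotree. -/
def Cotree.leaves : Cotree V → Set V
  | .leaf v => {v}
  | .node _ l r => Cotree.leaves l ∪ Cotree.leaves r

/-- The structural condition for a cotree to describe (an induced subgraph of) `G`:
at every inner node, the leaf sets of the two children are disjoint, and vertices
below different children are adjacent iff the node is a join (`true`) node. -/
def Cotree.Represents (G : SimpleGraph V) : Cotree V → Prop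
  | .leaf _ => True
  | .node b l r => Cotree.Represents G l ∧ Cotree.Represents G r ∧
      Disjoint (Cotree.leaves l) (Cotree.leaves r) ∧
      ∀ x ∈ Cotree.leaves l, ∀ y ∈ Cotree.leaves r, (G.Adj x y ↔ b = true)

/-- `T` is a binary cotree of the graph `G`: it records a recursive construction of
`G` by disjoint unions and joins, and its leaves are exactly the vertices of `G`. -/
def Cotree.IsCotreeOf (T : Cotree V) (G : SimpleGraph V) : Prop :=
  Cotree.Represents G T ∧ Cotree.leaves T = Set.univ

/-- `σ` is an hc-coloring with respect to the cotree `T`: at every join node the color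
sets of the two children are disjoint, and at every union node one of the two color
sets contains the other. -/
def IsHCWrt {α : Type*} (σ : V → α) : Cotree V → Prop
  | .leaf _ => True
  | .node b l r => IsHCWrt σ l ∧ IsHCWrt σ r ∧
      (b = true → Disjoint (σ '' Cotree.leaves l) (σ '' Cotree.leaves r)) ∧
      (b = false → σ '' Cotree.leaves l ⊆ σ '' Cotree.leaves r ∨
                   σ '' Cotree.leaves r ⊆ σ '' Cotree.leaves l)

/-- A greedy coloring: a proper coloring with colors `1, 2, …` such that every vertex
`v` has, for each color `c` with `1 ≤ c < σ v`, a neighbor colored `c`. -/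
def IsGreedyColoring (G : SimpleGraph V) (σ : V → ℕ) : Prop :=
  (∀ x y, G.Adj x y → σ x ≠ σ y) ∧ (∀ v, 1 ≤ σ v) ∧
    ∀ v c, 1 ≤ c → c < σ v → ∃ u, G.Adj v u ∧ σ u = c

/-- The coloring `σ` uses exactly `χ` many colors on the subgraph of `G` induced by `L`. -/
def UsesChiColors {α : Type*} (G : SimpleGraph V) (σ : V → α) (L : Set V) : Prop :=
  (((σ '' L).ncard : ℕ∞) = (G.induce L).chromaticNumber)

/-- `σ` is recursively minimal with respect to the cotree `T`: every subgraph of `G`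
arising in the recursive construction recorded by `T` is colored with the minimum
possible number of colors. -/
def IsRecMinWrt {α : Type*} (G : SimpleGraph V) (σ : V → α) : Cotree V → Prop
  | .leaf v => UsesChiColors G σ {v}
  | .node _ l r => UsesChiColors G σ (Cotree.leaves l ∪ Cotree.leaves r) ∧
      IsRecMinWrt G σ l ∧ IsRecMinWrt G σ r

/-- `σ` is a recursively minimal coloring of `G`, i.e. `(G, σ)` is color-minimal. -/
def IsRecMinColoring {α : Type*} (G : SimpleGraph V) (σ : V → α) : Prop :=
  ∃ T : Cotree V, Cotree.IsCotreeOf T G ∧ IsRecMinWrt G σ T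

/-- `s` occurs as a subtree of `T` (rooted at some vertex of `T`). -/
def Cotree.IsSubtreeOf : Cotree V → Cotree V → Prop
  | s, .leaf v => s = .leaf v
  | s, .node b l r => s = .node b l r ∨ Cotree.IsSubtreeOf s l ∨ Cotree.IsSubtreeOf s r

/-- hc-coloring condition for a coloring defined only on the vertex set `L`. -/
def IsHCOn {α : Type*} {L : Set V} (f : L → α) : Cotree V → Prop
  | .leaf _ => True
  | .node b l r => IsHCOn f l ∧ IsHCOn f r ∧
      (b = true → Disjoint (f '' (Subtype.val ⁻¹' Cotree.leaves l))
                           (f '' (Subtype.val ⁻¹' Cotree.leaves r))) ∧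
      (b = false → f '' (Subtype.val ⁻¹' Cotree.leaves l) ⊆
                     f '' (Subtype.val ⁻¹' Cotree.leaves r) ∨
                   f '' (Subtype.val ⁻¹' Cotree.leaves r) ⊆
                     f '' (Subtype.val ⁻¹' Cotree.leaves l))

/-- The number of hc-colorings of the subgraph of `G` induced by the leaves of `T`,
with respect to `T`, using colors from the fixed color set `Fin k`. -/
noncomputable def hcCount (G : SimpleGraph V) (T : Cotree V) (k : ℕ) : ℕ :=
  Set.ncard {f : ↥(Cotree.leaves T) → Fin k |
    (∀ x y : ↥(Cotree.leaves T), G.Adj ↑x ↑y → f x ≠ f y) ∧ IsHCOn f T}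

/-- The number of hc-colorings of `G` (with respect to some binary cotree of `G`),
using colors from the fixed color set `Fin k`. -/
noncomputable def hcColoringCount {W : Type*} (G : SimpleGraph W) (k : ℕ) : ℕ :=
  Set.ncard {σ : W → Fin k | (∀ x y, G.Adj x y → σ x ≠ σ y) ∧
    ∃ T : Cotree W, Cotree.IsCotreeOf T G ∧ IsHCWrt σ T}
section Aux
variable {V S : Type*} [Fintype V]

lemma colorable_restrict (G : SimpleGraph V) {L M : Set V} (h : L ⊆ M) {m : ℕ}
    (hc : (G.induce M).Colorable m) : (G.induce L).Colorable m := by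
  obtain ⟨c⟩ := hc
  exact ⟨SimpleGraph.Coloring.mk (fun v => c ⟨v.1, h v.2⟩) (fun hab => c.valid hab)⟩

lemma colorable_of_image (G : SimpleGraph V) (σ : V → S)
    (hproper : ∀ x y, G.Adj x y → σ x ≠ σ y) (L : Set V) :
    (G.induce L).Colorable ((σ '' L).ncard) := by
  have hfin : (σ '' L).Finite := (L.toFinite).image σ
  haveI : Fintype ↥(σ '' L) := hfin.fintype
  have C : (G.induce L).Coloring ↥(σ '' L) :=
    SimpleGraph.Coloring.mk (fun v => ⟨σ v.1, Set.mem_image_of_mem σ v.2⟩)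
      (fun {a b} hab hne => hproper _ _ hab (congrArg Subtype.val hne))
  have := C.colorable
  rwa [show Fintype.card ↥(σ '' L) = (σ '' L).ncard by
    rw [← Nat.card_coe_set_eq, Nat.card_eq_fintype_card]] at this

lemma hc_lower (G : SimpleGraph V) (σ : V → S)
    (hproper : ∀ x y, G.Adj x y → σ x ≠ σ y) :
    ∀ T : Cotree V, T.Represents G → IsHCWrt σ T →
      ∀ m : ℕ, (G.induce T.leaves).Colorable m → (σ '' T.leaves).ncard ≤ m := by
  intro T
  induction T with
  | leaf v =>
    intro _ _ m hc
    obtain ⟨c⟩ := hc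
    have hm : 0 < m := Fin.pos (c ⟨v, rfl⟩)
    have : σ '' (Cotree.leaf v).leaves = {σ v} := by
      simp [Cotree.leaves]
    rw [this, Set.ncard_singleton]
    omega
  | node b l r ihl ihr =>
    intro hrep hhc m hc
    obtain ⟨hrl, hrr, hdis, hadj⟩ := hrep
    obtain ⟨hhl, hhr, hjoin, hunion⟩ := hhc
    have himg : σ '' (Cotree.node b l r).leaves = σ '' l.leaves ∪ σ '' r.leaves := by
      simp [Cotree.leaves, Set.image_union]
    have hsubl : l.leaves ⊆ (Cotree.node b l r).leaves := Set.subset_union_left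
    have hsubr : r.leaves ⊆ (Cotree.node b l r).leaves := Set.subset_union_right
    cases b with
    | false =>
      have hl := ihl hrl hhl m (colorable_restrict G hsubl hc)
      have hr := ihr hrr hhr m (colorable_restrict G hsubr hc)
      rcases hunion rfl with h | h
      · rw [himg, Set.union_eq_self_of_subset_left h]; exact hr
      · rw [himg, Set.union_eq_self_of_subset_right h]; exact hl
    | true =>
      obtain ⟨c⟩ := hc
      set A : Set (Fin m) := c '' (Subtype.val ⁻¹' l.leaves) with hA
      set B : Set (Fin m) := c '' (Subtype.val ⁻¹' r.leaves) with hB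
      -- colorings of the parts into A, B
      haveI : Fintype ↥A := Fintype.ofFinite _
      haveI : Fintype ↥B := Fintype.ofFinite _
      have cl : (G.induce l.leaves).Coloring ↥A :=
        SimpleGraph.Coloring.mk
          (fun v => ⟨c ⟨v.1, hsubl v.2⟩, ⟨⟨v.1, hsubl v.2⟩, v.2, rfl⟩⟩)
          (fun {x y} hab hne => c.valid
            (show (G.induce _).Adj ⟨x.1, hsubl x.2⟩ ⟨y.1, hsubl y.2⟩ from hab)
            (congrArg Subtype.val hne))
      have cr : (G.induce r.leaves).Coloring ↥B :=
        SimpleGraph.Coloring.mk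
          (fun v => ⟨c ⟨v.1, hsubr v.2⟩, ⟨⟨v.1, hsubr v.2⟩, v.2, rfl⟩⟩)
          (fun {x y} hab hne => c.valid
            (show (G.induce _).Adj ⟨x.1, hsubr x.2⟩ ⟨y.1, hsubr y.2⟩ from hab)
            (congrArg Subtype.val hne))
      have hAcard : Fintype.card ↥A = A.ncard := by
        rw [← Nat.card_coe_set_eq, Nat.card_eq_fintype_card]
      have hBcard : Fintype.card ↥B = B.ncard := by
        rw [← Nat.card_coe_set_eq, Nat.card_eq_fintype_card]
      have hl := ihl hrl hhl _ (hAcard ▸ cl.colorable)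
      have hr := ihr hrr hhr _ (hBcard ▸ cr.colorable)
      have hABdis : Disjoint A B := by
        rw [Set.disjoint_left]
        rintro x ⟨⟨u, hu⟩, hul, rfl⟩ ⟨⟨w, hw⟩, hwr, hcw⟩
        have hadj' : G.Adj u w := (hadj u hul w hwr).2 rfl
        exact c.valid (by exact hadj' : (G.induce _).Adj ⟨u, hu⟩ ⟨w, hw⟩) hcw.symm
      have hsum : A.ncard + B.ncard ≤ m := by
        rw [← Set.ncard_union_eq hABdis (A.toFinite) (B.toFinite)]
        calc (A ∪ B).ncard ≤ (Set.univ : Set (Fin m)).ncard :=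
              Set.ncard_le_ncard (Set.subset_univ _) Set.finite_univ
          _ = m := by rw [Set.ncard_univ, Nat.card_eq_fintype_card, Fintype.card_fin]
      have hdisimg : Disjoint (σ '' l.leaves) (σ '' r.leaves) := hjoin rfl
      rw [himg, Set.ncard_union_eq hdisimg ((l.leaves.toFinite).image σ)
        ((r.leaves.toFinite).image σ)]
      omega

end Aux

/-- If `σ : V → S` is a surjective proper coloring of a cograph `G`
that is an hc-coloring of `G` (w.r.t. some binary cotree of `G`), then `|S| = χ(G)`. -/
theorem hc_coloring_card_eq_chromaticNumber {V S : Type*} [Fintype V] [Nonempty V]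
    (G : SimpleGraph V) (hG : IsCograph G)
    (σ : V → S) (hsurj : Function.Surjective σ)
    (hproper : ∀ x y, G.Adj x y → σ x ≠ σ y)
    (hhc : ∃ T : Cotree V, Cotree.IsCotreeOf T G ∧ IsHCWrt σ T) :
    (Nat.card S : ℕ∞) = G.chromaticNumber := by
  obtain ⟨T, ⟨hrep, huniv⟩, hhcT⟩ := hhc
  haveI : Finite S := Finite.of_surjective σ hsurj
  haveI : Fintype S := Fintype.ofFinite S
  have hrange : σ '' T.leaves = Set.univ := by
    rw [huniv, Set.image_univ, Set.range_eq_univ.mpr hsurj]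
  have hcardS : (σ '' T.leaves).ncard = Nat.card S := by
    rw [hrange, Set.ncard_univ]
  -- upper bound: G is colorable with Nat.card S colors
  have hcol : G.Colorable (Nat.card S) := by
    have C : G.Coloring S := SimpleGraph.Coloring.mk σ (fun {x y} h => hproper x y h)
    have := C.colorable
    rwa [← Nat.card_eq_fintype_card] at this
  have hle : G.chromaticNumber ≤ (Nat.card S : ℕ∞) := hcol.chromaticNumber_le
  -- lower bound
  have hge : (Nat.card S : ℕ∞) ≤ G.chromaticNumber := by
    have hcolchi := G.colorable_chromaticNumber_of_fintype
    have : (G.induce T.leaves).Colorable (ENat.toNat G.chromaticNumber) := by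
      obtain ⟨c⟩ := hcolchi
      exact ⟨SimpleGraph.Coloring.mk (fun v => c v.1) (fun hab => c.valid hab)⟩
    have hlb := hc_lower G σ hproper T hrep hhcT _ this
    rw [hcardS] at hlb
    have hne : G.chromaticNumber ≠ ⊤ :=
      (lt_of_le_of_lt hle (WithTop.coe_lt_top _)).ne
    calc (Nat.card S : ℕ∞) ≤ (ENat.toNat G.chromaticNumber : ℕ∞) := by
          exact_mod_cast hlb
      _ = G.chromaticNumber := ENat.coe_toNat hne
  exact le_antisymm hge hle
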